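/- Let γ > 0 and suppose β_n = 1 − γ/ℓ_n (for n large enough that this lies in [0,1]). Then for every real c, lim_{n → ∞} d_n(t_n + c·w_n) = e^{−c}·(1 + e^{γ}); that is, a profile cutoff occurs at (t_n, w_n) with profile F(c) = e^{−c}(1 + e^{γ}). -/

import Mathlib

open Filter Real
open scoped Topology

/-- `ℓ_n = log(n / log n)`. -/
noncomputable def ell (n : ℕ) : ℝ := Real.log (n / Real.log n)

/-- Distance to equilibrium of the Ornstein–Uhlenbeck example of Barrera–Ycart:
`d_n(t) = Σ_{i=1}^{9^n} a_{i,n} e^{-ρ_{i,n} t}` with `a_{1,n} = e^n`,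
`ρ_{1,n} = n/(1 + (β_n/n) ℓ_n)`, and for `2 ≤ i ≤ 9^n`:
`a_{i,n} = e^{-n}`, `ρ_{i,n} = log(e^n + (i-1) e^{-n})`. -/
noncomputable def dCut (β : ℕ → ℝ) (n : ℕ) (t : ℝ) : ℝ :=
  Real.exp n * Real.exp (-((n : ℝ) / (1 + β n / n * ell n)) * t) +
    ∑ i ∈ Finset.Icc (2 : ℕ) (9 ^ n),
      Real.exp (-(n : ℝ)) *
        Real.exp (-Real.log (Real.exp n + ((i : ℝ) - 1) * Real.exp (-(n : ℝ))) * t)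

/-- Cutoff location `t_n = 1 + β_n ℓ_n / n`. -/
noncomputable def cutT (β : ℕ → ℝ) (n : ℕ) : ℝ := 1 + β n * ell n / n

/-- Window width `w_n = t_n / n`. -/
noncomputable def cutW (β : ℕ → ℝ) (n : ℕ) : ℝ := cutT β n / n

/-- Correction term `r_n = ℓ_n w_n`. -/
noncomputable def cutR (β : ℕ → ℝ) (n : ℕ) : ℝ := ell n * cutW β n

/-! ### Auxiliary lemmas on `ell` -/

lemma log_pos_of3 {n : ℕ} (hn : 3 ≤ n) : 0 < Real.log n := by
  apply Real.log_pos; exact_mod_cast by omega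

lemma ell_eq {n : ℕ} (hn : 3 ≤ n) : ell n = Real.log n - Real.log (Real.log n) := by
  have h1 : (n:ℝ) ≠ 0 := by positivity
  have h2 : Real.log n ≠ 0 := (log_pos_of3 hn).ne'
  rw [ell, Real.log_div h1 h2]

lemma tendsto_logn : Tendsto (fun n : ℕ => Real.log n) atTop atTop :=
  Real.tendsto_log_atTop.comp tendsto_natCast_atTop_atTop

lemma tendsto_log_div : Tendsto (fun x : ℝ => Real.log x / x) atTop (𝓝 0) :=
  Real.isLittleO_log_id_atTop.tendsto_div_nhds_zero

lemma tendsto_loglog_div_log :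
    Tendsto (fun n : ℕ => Real.log (Real.log n) / Real.log n) atTop (𝓝 0) :=
  tendsto_log_div.comp tendsto_logn

lemma tendsto_ell_div_log : Tendsto (fun n : ℕ => ell n / Real.log n) atTop (𝓝 1) := by
  have : Tendsto (fun n : ℕ => 1 - Real.log (Real.log n) / Real.log n) atTop (𝓝 1) := by
    simpa using tendsto_const_nhds.sub tendsto_loglog_div_log
  refine this.congr' ?_
  filter_upwards [eventually_atTop.2 ⟨3, fun n hn => hn⟩] with n hn
  have h2 : Real.log n ≠ 0 := (log_pos_of3 hn).ne'
  rw [ell_eq hn]; field_simp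

lemma tendsto_ell_atTop : Tendsto ell atTop atTop :=
  (tendsto_ell_div_log.pos_mul_atTop zero_lt_one tendsto_logn).congr' <| by
    filter_upwards [eventually_atTop.2 ⟨3, fun n hn => hn⟩] with n hn
    field_simp [(log_pos_of3 hn).ne']

lemma tendsto_logn_div_n : Tendsto (fun n : ℕ => Real.log n / n) atTop (𝓝 0) :=
  tendsto_log_div.comp tendsto_natCast_atTop_atTop

lemma one_le_log {n : ℕ} (hn : 3 ≤ n) : 1 ≤ Real.log n := by
  rw [show (1:ℝ) = Real.log (Real.exp 1) by simp]
  apply Real.log_le_log (Real.exp_pos 1)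
  calc Real.exp 1 ≤ 3 := by linarith [Real.exp_one_lt_d9]
    _ ≤ (n:ℝ) := by exact_mod_cast hn

lemma ell_le_log {n : ℕ} (hn : 3 ≤ n) : ell n ≤ Real.log n := by
  rw [ell_eq hn]
  have := Real.log_nonneg (one_le_log hn)
  linarith

lemma tendsto_ell_div_n : Tendsto (fun n : ℕ => ell n / n) atTop (𝓝 0) := by
  have h0 : Tendsto (fun _ : ℕ => (0:ℝ)) atTop (𝓝 0) := tendsto_const_nhds
  refine tendsto_of_tendsto_of_tendsto_of_le_of_le' h0 tendsto_logn_div_n ?_ ?_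
  · filter_upwards [tendsto_ell_atTop.eventually_ge_atTop 0,
      eventually_atTop.2 ⟨1, fun n hn => hn⟩] with n h1 h2
    positivity
  · filter_upwards [eventually_atTop.2 ⟨3, fun n hn => hn⟩] with n hn
    have h0 : (0:ℝ) < n := by positivity
    gcongr
    exact ell_le_log hn

/-! ### The integrand and its integral -/

noncomputable def fint (t : ℝ) (n : ℕ) (x : ℝ) : ℝ :=
  Real.exp (-(n:ℝ)) * (Real.exp n + x * Real.exp (-(n:ℝ))) ^ (-t)

lemma anti_fint (t : ℝ) (ht : 0 < t) (n : ℕ) : AntitoneOn (fint t n) (Set.Ici 0) := by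
  intro x hx y hy hxy
  have hbx : (0:ℝ) < Real.exp n + x * Real.exp (-(n:ℝ)) := by
    have := Real.exp_pos (n:ℝ); have := Real.exp_pos (-(n:ℝ)); simp only [Set.mem_Ici] at hx
    nlinarith
  have hby : Real.exp n + x * Real.exp (-(n:ℝ)) ≤ Real.exp n + y * Real.exp (-(n:ℝ)) := by
    have := (Real.exp_pos (-(n:ℝ))).le; nlinarith
  exact mul_le_mul_of_nonneg_left
    (Real.rpow_le_rpow_of_nonpos hbx hby (by linarith)) (Real.exp_pos _).le

lemma integral_fint (n : ℕ) (t : ℝ) (ht : t ≠ 1) (a b : ℝ) (ha : 0 ≤ a) (hb : 0 ≤ b) :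
    ∫ x in a..b, fint t n x =
      (Real.exp n + a * Real.exp (-(n:ℝ))) ^ (1 - t) / (t - 1) -
      (Real.exp n + b * Real.exp (-(n:ℝ))) ^ (1 - t) / (t - 1) := by
  have hbase : ∀ x ∈ Set.uIcc a b, (0:ℝ) < Real.exp n + x * Real.exp (-(n:ℝ)) := by
    intro x hx
    have hx0 : 0 ≤ x := by
      rcases Set.mem_uIcc.mp hx with h | h
      · linarith [h.1]
      · linarith [h.1]
    positivity
  have hderiv : ∀ x ∈ Set.uIcc a b,
      HasDerivAt (fun y => (Real.exp n + y * Real.exp (-(n:ℝ))) ^ (1 - t) / (1 - t))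
        (fint t n x) x := by
    intro x hx
    have hb0 : (0:ℝ) < Real.exp n + x * Real.exp (-(n:ℝ)) := hbase x hx
    have hg : HasDerivAt (fun y : ℝ => Real.exp n + y * Real.exp (-(n:ℝ)))
        (Real.exp (-(n:ℝ))) x := by
      simpa using ((hasDerivAt_id x).mul_const (Real.exp (-(n:ℝ)))).const_add (Real.exp (n:ℝ))
    have h2 := (hg.rpow_const (p := 1 - t) (Or.inl hb0.ne')).div_const (1 - t)
    refine h2.congr_deriv ?_
    rw [fint, show (1 - t - 1 : ℝ) = -t by ring]
    have h1t : (1:ℝ) - t ≠ 0 := by intro h; apply ht; linarith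
    field_simp
  have hint : IntervalIntegrable (fint t n) MeasureTheory.volume a b := by
    apply ContinuousOn.intervalIntegrable
    apply continuousOn_const.mul
    apply ContinuousOn.rpow_const
    · exact (continuous_const.add (continuous_id.mul continuous_const)).continuousOn
    · exact fun x hx => Or.inl (hbase x hx).ne'
  rw [intervalIntegral.integral_eq_sub_of_hasDerivAt hderiv hint]
  have h1t : (1:ℝ) - t ≠ 0 := by intro h; apply ht; linarith
  have ht1 : (t:ℝ) - 1 ≠ 0 := by intro h; apply ht; linarith
  field_simp
  ring

lemma sum_eq_fint (t : ℝ) (n : ℕ) :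
    ∑ i ∈ Finset.Icc (2 : ℕ) (9 ^ n),
      Real.exp (-(n : ℝ)) *
        Real.exp (-Real.log (Real.exp n + ((i : ℝ) - 1) * Real.exp (-(n : ℝ))) * t) =
    ∑ k ∈ Finset.range (9 ^ n - 1), fint t n (1 + (k : ℝ)) := by
  rw [← Finset.Ico_add_one_right_eq_Icc, Finset.sum_Ico_eq_sum_range,
    show 9 ^ n + 1 - 2 = 9 ^ n - 1 by omega]
  apply Finset.sum_congr rfl
  intro k _
  have harg : ((2 + k : ℕ) : ℝ) - 1 = 1 + (k : ℝ) := by push_cast; ring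
  have hu : (0:ℝ) < Real.exp n + (1 + (k:ℝ)) * Real.exp (-(n:ℝ)) := by positivity
  rw [harg, fint, Real.rpow_def_of_pos hu]
  congr 1
  ring

lemma sum_ge (t : ℝ) (ht0 : 0 < t) (n : ℕ) :
    (∫ x in (1:ℝ)..(1 + ((9 ^ n - 1 : ℕ) : ℝ)), fint t n x) ≤
      ∑ k ∈ Finset.range (9 ^ n - 1), fint t n (1 + (k : ℝ)) := by
  apply AntitoneOn.integral_le_sum
  exact (anti_fint t ht0 n).mono (fun x hx => le_trans zero_le_one hx.1)

lemma sum_le (t : ℝ) (ht0 : 0 < t) (n : ℕ) :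
    ∑ k ∈ Finset.range (9 ^ n - 1), fint t n (1 + (k : ℝ)) ≤
      ∫ x in (0:ℝ)..(0 + ((9 ^ n - 1 : ℕ) : ℝ)), fint t n x := by
  have h := AntitoneOn.sum_le_integral (x₀ := (0:ℝ)) (a := 9 ^ n - 1) (f := fint t n)
    ((anti_fint t ht0 n).mono (fun x hx => hx.1))
  refine le_trans (le_of_eq ?_) h
  apply Finset.sum_congr rfl
  intro k _
  congr 1
  push_cast
  ring

lemma pow89 (n : ℕ) (hn : 1 ≤ n) : 8 ^ n + 1 ≤ 9 ^ n := by
  induction n with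
  | zero => omega
  | succ m ih =>
    rcases Nat.eq_zero_or_pos m with h | h
    · subst h; norm_num
    · have := ih h
      have h8 : 0 < 8 ^ m := Nat.pow_pos (by norm_num)
      calc 8 ^ (m + 1) + 1 = 8 * 8 ^ m + 1 := by ring_nf
        _ ≤ 8 * (8 ^ m + 1) := by omega
        _ ≤ 8 * 9 ^ m := by omega
        _ ≤ 9 * 9 ^ m := by omega
        _ = 9 ^ (m + 1) := by ring

/-! ### Main asymptotics -/

section main
variable (γ : ℝ) (β : ℕ → ℝ) (c : ℝ)

noncomputable def sfn (n : ℕ) : ℝ := ell n - γ + c * cutT β n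
noncomputable def tfn (n : ℕ) : ℝ := cutT β n + c * cutW β n
noncomputable def Efn (n : ℕ) (x : ℝ) : ℝ :=
  (Real.exp n + x * Real.exp (-(n:ℝ))) ^ (1 - tfn β c n) / (tfn β c n - 1)

lemma cutT_eq (hβ : ∀ n, β n = 1 - γ / ell n) :
    ∀ᶠ n in atTop, cutT β n = 1 + (ell n - γ) / n := by
  filter_upwards [tendsto_ell_atTop.eventually_gt_atTop 0] with n hl
  rw [cutT, hβ n]
  field_simp

lemma tendsto_cutT (hβ : ∀ n, β n = 1 - γ / ell n) :
    Tendsto (fun n => cutT β n) atTop (𝓝 1) := by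
  have h1 : Tendsto (fun n : ℕ => 1 + (ell n / n - γ / n)) atTop (𝓝 1) := by
    have hg : Tendsto (fun n : ℕ => γ / n) atTop (𝓝 0) :=
      tendsto_const_nhds.div_atTop tendsto_natCast_atTop_atTop
    simpa using tendsto_const_nhds.add (tendsto_ell_div_n.sub hg)
  refine h1.congr' ?_
  filter_upwards [cutT_eq γ β hβ, eventually_atTop.2 ⟨1, fun n hn => hn⟩] with n h h1
  rw [h]; ring

lemma tendsto_sfn (hβ : ∀ n, β n = 1 - γ / ell n) :
    Tendsto (sfn γ β c) atTop atTop := by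
  have h2 : Tendsto (fun n => -γ + c * cutT β n) atTop (𝓝 (-γ + c * 1)) :=
    tendsto_const_nhds.add (tendsto_const_nhds.mul (tendsto_cutT γ β hβ))
  have h3 : ∀ᶠ n in atTop, (-γ + c * 1 - 1 : ℝ) ≤ -γ + c * cutT β n := by
    filter_upwards [h2.eventually (eventually_ge_nhds (show -γ + c * 1 - 1 < -γ + c * 1 by
      linarith))] with n h
    exact h
  have := tendsto_atTop_add_right_of_le' atTop (-γ + c * 1 - 1) tendsto_ell_atTop h3
  refine this.congr (fun n => ?_)
  rw [sfn]; ring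

lemma tendsto_sfn_div_log (hβ : ∀ n, β n = 1 - γ / ell n) :
    Tendsto (fun n => sfn γ β c n / Real.log n) atTop (𝓝 1) := by
  have hg : Tendsto (fun n : ℕ => γ / Real.log n) atTop (𝓝 0) :=
    (tendsto_const_nhds (x := γ)).div_atTop tendsto_logn
  have hc : Tendsto (fun n : ℕ => c * cutT β n / Real.log n) atTop (𝓝 0) :=
    (tendsto_const_nhds.mul (tendsto_cutT γ β hβ)).div_atTop tendsto_logn
  have := (tendsto_ell_div_log.sub hg).add hc
  simp only [sub_zero, add_zero] at this
  refine this.congr (fun n => ?_)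
  simp only [sfn]; ring

lemma tendsto_log_div_sfn (hβ : ∀ n, β n = 1 - γ / ell n) :
    Tendsto (fun n : ℕ => Real.log n / sfn γ β c n) atTop (𝓝 1) := by
  have := (tendsto_sfn_div_log γ β c hβ).inv₀ one_ne_zero
  simp only [inv_div, inv_one] at this
  exact this

lemma tendsto_M (hβ : ∀ n, β n = 1 - γ / ell n) :
    Tendsto (fun n : ℕ => (n : ℝ) * Real.exp (-(sfn γ β c n)) / sfn γ β c n) atTop
      (𝓝 (Real.exp (γ - c))) := by
  have hE : Tendsto (fun n => Real.exp (γ - c * cutT β n)) atTop (𝓝 (Real.exp (γ - c))) := by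
    have h0 : Tendsto (fun n => γ - c * cutT β n) atTop (𝓝 (γ - c * 1)) :=
      (tendsto_const_nhds (x := γ)).sub ((tendsto_const_nhds (x := c)).mul (tendsto_cutT γ β hβ))
    rw [mul_one] at h0
    exact (Real.continuous_exp.tendsto _).comp h0
  have h := (tendsto_log_div_sfn γ β c hβ).mul hE
  rw [one_mul] at h
  refine h.congr' ?_
  filter_upwards [eventually_atTop.2 ⟨3, fun n hn => hn⟩] with n hn
  have hn0 : (n:ℝ) ≠ 0 := by positivity
  have hlog : (0:ℝ) < (n:ℝ) / Real.log n := div_pos (by positivity) (log_pos_of3 hn)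
  have he : Real.exp (-(ell n)) = Real.log n / n := by
    rw [ell, Real.exp_neg, Real.exp_log hlog, inv_div]
  have : Real.exp (-(sfn γ β c n)) = Real.log n / n * Real.exp (γ - c * cutT β n) := by
    rw [sfn, show -(ell n - γ + c * cutT β n) = -(ell n) + (γ - c * cutT β n) by ring,
      Real.exp_add, he]
  rw [this]
  field_simp

lemma hsT (hβ : ∀ n, β n = 1 - γ / ell n) :
    ∀ᶠ n : ℕ in atTop, (n : ℝ) * (tfn β c n - 1) = sfn γ β c n := by
  filter_upwards [cutT_eq γ β hβ, eventually_atTop.2 ⟨1, fun n hn => hn⟩] with n h hn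
  have hn0 : (n:ℝ) ≠ 0 := by positivity
  rw [tfn, cutW, sfn, h]
  field_simp
  ring

lemma tendsto_tfn (hβ : ∀ n, β n = 1 - γ / ell n) : Tendsto (tfn β c) atTop (𝓝 1) := by
  have h2 : Tendsto (fun n : ℕ => c * cutT β n / n) atTop (𝓝 0) :=
    ((tendsto_const_nhds (x := c)).mul (tendsto_cutT γ β hβ)).div_atTop
      tendsto_natCast_atTop_atTop
  have := (tendsto_cutT γ β hβ).add h2
  rw [add_zero] at this
  refine this.congr (fun n => ?_)
  rw [tfn, cutW, mul_div_assoc]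

/-- the good event -/
def good (n : ℕ) : Prop :=
  3 ≤ n ∧ 0 < sfn γ β c n ∧ (n : ℝ) * (tfn β c n - 1) = sfn γ β c n

lemma good_ev (hβ : ∀ n, β n = 1 - γ / ell n) : ∀ᶠ n in atTop, good γ β c n := by
  filter_upwards [eventually_atTop.2 ⟨3, fun n hn => hn⟩,
    (tendsto_sfn γ β c hβ).eventually_gt_atTop 0, hsT γ β c hβ] with n h1 h2 h3
  exact ⟨h1, h2, h3⟩

lemma good_facts {n : ℕ} (h : good γ β c n) :
    0 < tfn β c n - 1 ∧ tfn β c n - 1 = sfn γ β c n / n ∧ tfn β c n ≠ 1 := by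
  obtain ⟨h1, h2, h3⟩ := h
  have hn0 : (0:ℝ) < n := by positivity
  have hT : tfn β c n - 1 = sfn γ β c n / n := by rw [← h3]; field_simp
  have hpos : 0 < tfn β c n - 1 := by rw [hT]; positivity
  exact ⟨hpos, hT, by intro he; rw [he] at hpos; simp at hpos⟩

lemma Efn0 {n : ℕ} (h : good γ β c n) :
    Efn β c n 0 = (n : ℝ) * Real.exp (-(sfn γ β c n)) / sfn γ β c n := by
  obtain ⟨hpos, hT, hne⟩ := good_facts γ β c h
  have hn0 : (0:ℝ) < n := by have := h.1; positivity
  have hs := h.2.1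
  rw [Efn, zero_mul, add_zero, ← Real.exp_mul,
    show (n:ℝ) * (1 - tfn β c n) = -(sfn γ β c n) by rw [← h.2.2]; ring, hT]
  field_simp

lemma Efn1 {n : ℕ} (h : good γ β c n) :
    Efn β c n 1 = ((n : ℝ) * Real.exp (-(sfn γ β c n)) / sfn γ β c n) *
      (1 + Real.exp (-(2 * n : ℝ))) ^ (1 - tfn β c n) := by
  obtain ⟨hpos, hT, hne⟩ := good_facts γ β c h
  have hn0 : (0:ℝ) < n := by have := h.1; positivity
  have hs := h.2.1
  have hbase : Real.exp n + 1 * Real.exp (-(n:ℝ)) =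
      Real.exp n * (1 + Real.exp (-(2 * n : ℝ))) := by
    rw [mul_add, mul_one, ← Real.exp_add]
    ring_nf
  rw [Efn, hbase, Real.mul_rpow (Real.exp_pos _).le (by positivity), ← Real.exp_mul,
    show (n:ℝ) * (1 - tfn β c n) = -(sfn γ β c n) by rw [← h.2.2]; ring, hT]
  field_simp

lemma Efn_nonneg {n : ℕ} (h : good γ β c n) (x : ℝ) (hx : 0 ≤ x) : 0 ≤ Efn β c n x := by
  obtain ⟨hpos, hT, hne⟩ := good_facts γ β c h
  have hb : (0:ℝ) < Real.exp n + x * Real.exp (-(n:ℝ)) := by positivity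
  exact div_nonneg (Real.rpow_nonneg hb.le _) hpos.le

lemma Efn_le {n : ℕ} (h : good γ β c n) (x : ℝ) (hx : (8:ℝ) ^ n ≤ x) :
    Efn β c n x ≤ ((n : ℝ) * Real.exp (-(sfn γ β c n)) / sfn γ β c n) *
      Real.exp (-((Real.log 8 - 2) * sfn γ β c n)) := by
  obtain ⟨hpos, hT, hne⟩ := good_facts γ β c h
  have hn0 : (0:ℝ) < n := by have := h.1; positivity
  have hs := h.2.1
  have h8 : (0:ℝ) < (8:ℝ) ^ n := by positivity
  have hkey : Real.exp ((n:ℝ) * (Real.log 8 - 1)) ≤ Real.exp n + x * Real.exp (-(n:ℝ)) := by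
    have h1 : Real.exp ((n:ℝ) * (Real.log 8 - 1)) = (8:ℝ) ^ n * Real.exp (-(n:ℝ)) := by
      rw [show (n:ℝ) * (Real.log 8 - 1) = Real.log 8 * n + (-(n:ℝ)) by ring, Real.exp_add,
        Real.exp_mul, Real.exp_log (by norm_num : (0:ℝ) < 8), Real.rpow_natCast]
    rw [h1]
    have : (8:ℝ) ^ n * Real.exp (-(n:ℝ)) ≤ x * Real.exp (-(n:ℝ)) := by
      apply mul_le_mul_of_nonneg_right hx (Real.exp_pos _).le
    linarith [Real.exp_pos (n:ℝ)]
  have hmono : (Real.exp n + x * Real.exp (-(n:ℝ))) ^ (1 - tfn β c n) ≤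
      (Real.exp ((n:ℝ) * (Real.log 8 - 1))) ^ (1 - tfn β c n) :=
    Real.rpow_le_rpow_of_nonpos (Real.exp_pos _) hkey (by linarith)
  have heq : (Real.exp ((n:ℝ) * (Real.log 8 - 1))) ^ (1 - tfn β c n) =
      Real.exp (-(sfn γ β c n)) * Real.exp (-((Real.log 8 - 2) * sfn γ β c n)) := by
    rw [← Real.exp_mul, ← Real.exp_add]
    congr 1
    linear_combination (-(Real.log 8 - 1)) * h.2.2
  rw [Efn]
  calc (Real.exp ↑n + x * Real.exp (-(n:ℝ))) ^ (1 - tfn β c n) / (tfn β c n - 1)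
      ≤ (Real.exp ((n:ℝ) * (Real.log 8 - 1))) ^ (1 - tfn β c n) / (tfn β c n - 1) := by
        gcongr
      _ = _ := by
        rw [heq, hT]
        field_simp

lemma tendsto_Efn0 (hβ : ∀ n, β n = 1 - γ / ell n) :
    Tendsto (fun n => Efn β c n 0) atTop (𝓝 (Real.exp (γ - c))) := by
  refine (tendsto_M γ β c hβ).congr' ?_
  filter_upwards [good_ev γ β c hβ] with n h
  exact (Efn0 γ β c h).symm

lemma tendsto_Fac (hβ : ∀ n, β n = 1 - γ / ell n) :
    Tendsto (fun n : ℕ => (1 + Real.exp (-(2 * n : ℝ))) ^ (1 - tfn β c n)) atTop (𝓝 1) := by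
  have he : Tendsto (fun n : ℕ => Real.exp (-(2 * n : ℝ))) atTop (𝓝 0) := by
    apply Real.tendsto_exp_atBot.comp
    apply Filter.tendsto_neg_atTop_atBot.comp
    exact tendsto_natCast_atTop_atTop.const_mul_atTop two_pos
  have hbase : Tendsto (fun n : ℕ => 1 + Real.exp (-(2 * n : ℝ))) atTop (𝓝 1) := by
    simpa using (tendsto_const_nhds (x := (1:ℝ))).add he
  have hlog : Tendsto (fun n : ℕ => Real.log (1 + Real.exp (-(2 * n : ℝ)))) atTop (𝓝 0) := by
    have := (Real.continuousAt_log (by norm_num : (1:ℝ) ≠ 0)).tendsto.comp hbase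
    simpa [Function.comp_def] using this
  have hT1 : Tendsto (fun n : ℕ => 1 - tfn β c n) atTop (𝓝 0) := by
    have := (tendsto_const_nhds (x := (1:ℝ))).sub (tendsto_tfn γ β c hβ)
    simpa using this
  have hmul : Tendsto (fun n : ℕ =>
      Real.log (1 + Real.exp (-(2 * n : ℝ))) * (1 - tfn β c n)) atTop (𝓝 0) := by
    simpa using hlog.mul hT1
  have := (Real.continuous_exp.tendsto 0).comp hmul
  rw [Real.exp_zero] at this
  refine this.congr (fun n => ?_)
  rw [Function.comp_apply, Real.rpow_def_of_pos (by positivity)]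

lemma tendsto_Efn1 (hβ : ∀ n, β n = 1 - γ / ell n) :
    Tendsto (fun n => Efn β c n 1) atTop (𝓝 (Real.exp (γ - c))) := by
  have := (tendsto_M γ β c hβ).mul (tendsto_Fac γ β c hβ)
  rw [mul_one] at this
  refine this.congr' ?_
  filter_upwards [good_ev γ β c hβ] with n h
  exact (Efn1 γ β c h).symm

lemma tendsto_Efn_big (hβ : ∀ n, β n = 1 - γ / ell n) (x : ℕ → ℝ)
    (hx : ∀ᶠ n : ℕ in atTop, (8:ℝ) ^ n ≤ x n) :
    Tendsto (fun n => Efn β c n (x n)) atTop (𝓝 0) := by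
  have hlog8 : (2:ℝ) < Real.log 8 := by
    rw [show (2:ℝ) = Real.log (Real.exp 2) by simp]
    apply Real.log_lt_log (Real.exp_pos 2)
    rw [show (2:ℝ) = 1 + 1 by norm_num, Real.exp_add]
    nlinarith [Real.exp_one_lt_d9, Real.exp_pos 1]
  have hexp : Tendsto (fun n : ℕ => Real.exp (-((Real.log 8 - 2) * sfn γ β c n))) atTop
      (𝓝 0) := by
    apply Real.tendsto_exp_atBot.comp
    apply Filter.tendsto_neg_atTop_atBot.comp
    exact (tendsto_sfn γ β c hβ).const_mul_atTop (by linarith)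
  have hup : Tendsto (fun n : ℕ => ((n : ℝ) * Real.exp (-(sfn γ β c n)) / sfn γ β c n) *
      Real.exp (-((Real.log 8 - 2) * sfn γ β c n))) atTop (𝓝 0) := by
    simpa using (tendsto_M γ β c hβ).mul hexp
  refine tendsto_of_tendsto_of_tendsto_of_le_of_le' tendsto_const_nhds hup ?_ ?_
  · filter_upwards [good_ev γ β c hβ, hx] with n h h8
    exact Efn_nonneg γ β c h (x n) (le_trans (by positivity) h8)
  · filter_upwards [good_ev γ β c hβ, hx] with n h h8
    exact Efn_le γ β c h (x n) h8

end main

/-- Case `β_n = 1 - γ/ℓ_n` with `γ > 0` of Barrera–Ycart: a profile cutoff at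
`(t_n, w_n)` with profile `F(c) = e^{-c} (1 + e^{γ})` occurs: for every real `c`,
`d_n(t_n + c w_n) → e^{-c} (1 + e^{γ})`. -/
theorem profile_cutoff_beta_gamma
    (γ : ℝ) (hγ : 0 < γ)
    (β : ℕ → ℝ) (hβ : ∀ n, β n = 1 - γ / ell n) (c : ℝ) :
    Tendsto (fun n => dCut β n (cutT β n + c * cutW β n)) atTop
      (𝓝 (Real.exp (-c) * (1 + Real.exp γ))) := by
  -- cast facts
  have hcast : ∀ n : ℕ, 1 ≤ n → ((9 ^ n - 1 : ℕ) : ℝ) = (9:ℝ) ^ n - 1 := by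
    intro n hn
    have : (1:ℕ) ≤ 9 ^ n := Nat.one_le_pow _ _ (by norm_num)
    push_cast [Nat.cast_sub this]
    ring
  -- limits of the sandwich bounds
  have hlo : Tendsto (fun n : ℕ => Efn β c n 1 - Efn β c n (1 + ((9 ^ n - 1 : ℕ) : ℝ))) atTop
      (𝓝 (Real.exp (γ - c))) := by
    have hbig : Tendsto (fun n : ℕ => Efn β c n (1 + ((9 ^ n - 1 : ℕ) : ℝ))) atTop (𝓝 0) := by
      apply tendsto_Efn_big γ β c hβ
      filter_upwards [eventually_atTop.2 ⟨1, fun n hn => hn⟩] with n hn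
      rw [hcast n hn]
      have h89 : (8:ℝ) ^ n ≤ (9:ℝ) ^ n := by
        apply pow_le_pow_left₀ (by norm_num) (by norm_num)
      linarith
    simpa using (tendsto_Efn1 γ β c hβ).sub hbig
  have hup : Tendsto (fun n : ℕ => Efn β c n 0 - Efn β c n (((9 ^ n - 1 : ℕ) : ℝ))) atTop
      (𝓝 (Real.exp (γ - c))) := by
    have hbig : Tendsto (fun n : ℕ => Efn β c n (((9 ^ n - 1 : ℕ) : ℝ))) atTop (𝓝 0) := by
      apply tendsto_Efn_big γ β c hβ
      filter_upwards [eventually_atTop.2 ⟨1, fun n hn => hn⟩] with n hn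
      rw [hcast n hn]
      have := pow89 n hn
      have h89 : ((8:ℕ) ^ n : ℝ) + 1 ≤ ((9:ℕ) ^ n : ℝ) := by exact_mod_cast this
      push_cast at h89
      linarith
    simpa using (tendsto_Efn0 γ β c hβ).sub hbig
  -- the sum converges to exp (γ - c)
  have hS : Tendsto (fun n : ℕ => ∑ i ∈ Finset.Icc (2 : ℕ) (9 ^ n),
      Real.exp (-(n : ℝ)) *
        Real.exp (-Real.log (Real.exp n + ((i : ℝ) - 1) * Real.exp (-(n : ℝ))) *
          (cutT β n + c * cutW β n))) atTop (𝓝 (Real.exp (γ - c))) := by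
    refine tendsto_of_tendsto_of_tendsto_of_le_of_le' hlo hup ?_ ?_
    · filter_upwards [good_ev γ β c hβ] with n h
      obtain ⟨hpos, hT, hne⟩ := good_facts γ β c h
      have ht0 : 0 < tfn β c n := by linarith
      have htfn : tfn β c n = cutT β n + c * cutW β n := rfl
      rw [← htfn, sum_eq_fint]
      refine le_trans (le_of_eq ?_) (sum_ge (tfn β c n) ht0 n)
      rw [integral_fint n (tfn β c n) hne 1 _ zero_le_one (by positivity)]
      rfl
    · filter_upwards [good_ev γ β c hβ] with n h
      obtain ⟨hpos, hT, hne⟩ := good_facts γ β c h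
      have ht0 : 0 < tfn β c n := by linarith
      have htfn : tfn β c n = cutT β n + c * cutW β n := rfl
      rw [← htfn, sum_eq_fint]
      refine le_trans (sum_le (tfn β c n) ht0 n) (le_of_eq ?_)
      rw [integral_fint n (tfn β c n) hne 0 _ le_rfl (by positivity)]
      rw [zero_add]
      rfl
  -- the first term is exactly exp (-c) eventually
  have h1 : ∀ᶠ n : ℕ in atTop,
      Real.exp n * Real.exp (-((n : ℝ) / (1 + β n / n * ell n)) * (cutT β n + c * cutW β n)) =
      Real.exp (-c) := by
    filter_upwards [(tendsto_cutT γ β hβ).eventually (eventually_gt_nhds (by norm_num : (0:ℝ) < 1)),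
      eventually_atTop.2 ⟨1, fun n hn => hn⟩] with n hc0 hn
    have hn0 : (n:ℝ) ≠ 0 := by positivity
    have hcT : 1 + β n / n * ell n = cutT β n := by
      rw [cutT, div_mul_eq_mul_div]
    rw [hcT, cutW, ← Real.exp_add]
    congr 1
    field_simp
    ring
  -- combine
  have hfinal := (tendsto_const_nhds (x := Real.exp (-c))).add hS
  have hval : Real.exp (-c) + Real.exp (γ - c) = Real.exp (-c) * (1 + Real.exp γ) := by
    rw [mul_add, mul_one, ← Real.exp_add]
    congr 2
    ring
  rw [hval] at hfinal
  refine hfinal.congr' ?_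
  filter_upwards [h1] with n h
  rw [dCut, h]
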